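/- arXiv:1202.2001 — 10 statements merged into one kernel-verified Lean document; each statement's English description precedes it below -/
import Mathlib

section
/- T is a conservative extension of ZF: for every L₀-sentence φ, T ⊨ φ' if and only if ZF ⊨ φ, where φ' is the image of φ under the language inclusion L₀ ↪ L'. -/
/-!
Statement 0: `T` (the restriction of SMT to the sublanguage `L'`) is a conservative
extension of `ZF`: for every `L₀`-sentence `φ`, `T ⊨ incl.onSentence φ` iff `ZF ⊨ φ`.
-/

open FirstOrder FirstOrder.Language

universe u

namespace SMTPaper

/-- The relation symbols of both `L₀` and `L'`: a single binary membership relation `∈'`. -/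
inductive MemRel : ℕ → Type
  | mem : MemRel 2

/-- The function symbols of `L'`: a single unary function symbol `br`. -/
inductive BrFun : ℕ → Type
  | br : BrFun 1

/-- `L₀`: the language with exactly one binary relation symbol (membership) and no
function symbols. -/
def L₀ : Language := ⟨fun _ => Empty, MemRel⟩

/-- `L'`: the language extending `L₀` by exactly one unary function symbol `br`. -/
def L' : Language := ⟨BrFun, MemRel⟩

/-- The language inclusion `L₀ ↪ L'`. -/
def incl : L₀ →ᴸ L' where
  onFunction := fun _ f => Empty.elim f
  onRelation := fun _ r => r

/-- The membership symbol of `L₀`. -/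
def mem₀ : L₀.Relations 2 := MemRel.mem

/-- The membership symbol of `L'`. -/
def mem' : L'.Relations 2 := MemRel.mem

/-- The symbol `br` of `L'`. -/
def brS : L'.Functions 1 := BrFun.br

section Axioms

variable {L : Language} (m : L.Relations 2)

/-- `t ∈' u` as a bounded formula. -/
def memB {k : ℕ} (t u : L.Term (Empty ⊕ Fin k)) : L.BoundedFormula Empty k :=
  m.boundedFormula₂ t u

/-- A de Bruijn variable with explicit bound. -/
def v {L : Language} (k : ℕ) {N : ℕ} (h : k < N) : L.Term (Empty ⊕ Fin N) :=
  Term.var (Sum.inr ⟨k, h⟩)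

/-- Extensionality: `∀x∀y((∀z(z ∈ x ↔ z ∈ y)) → x = y)`. -/
def extAx : L.Sentence :=
  ∀' ∀' ((∀' (memB m &2 &0 ⇔ memB m &2 &1)) ⟹ Term.bdEqual (&0) &1)

/-- Empty set: `∃e∀z(z ∉ e)`. -/
def emptyAx : L.Sentence := ∃' ∀' ∼(memB m &1 &0)

/-- Pairing: `∀a∀b∃p∀z(z ∈ p ↔ (z = a ∨ z = b))`. -/
def pairAx : L.Sentence :=
  ∀' ∀' ∃' ∀' (memB m &3 &2 ⇔ (Term.bdEqual (&3) &0 ⊔ Term.bdEqual (&3) &1))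

/-- Union: `∀x∃u∀z(z ∈ u ↔ ∃w(w ∈ x ∧ z ∈ w))`. -/
def unionAx : L.Sentence :=
  ∀' ∃' ∀' (memB m &2 &1 ⇔ ∃' (memB m &3 &0 ⊓ memB m &2 &3))

/-- Power set: `∀x∃P∀z(z ∈ P ↔ ∀w(w ∈ z → w ∈ x))`. -/
def powerAx : L.Sentence :=
  ∀' ∃' ∀' (memB m &2 &1 ⇔ ∀' (memB m &3 &2 ⟹ memB m &3 &0))

/-- Infinity: `∃x((∃e(e ∈ x ∧ ∀z(z ∉ e))) ∧ ∀y(y ∈ x → ∃s(s ∈ x ∧ ∀w(w ∈ s ↔ (w ∈ y ∨ w = y)))))`. -/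
def infAx : L.Sentence :=
  ∃' ((∃' (memB m &1 &0 ⊓ ∀' ∼(memB m &2 &1))) ⊓
    (∀' (memB m &1 &0 ⟹
      ∃' (memB m &2 &0 ⊓ ∀' (memB m &3 &2 ⇔ (memB m &3 &1 ⊔ Term.bdEqual (&3) &1))))))

/-- Foundation: `∀x(∃a(a ∈ x) → ∃y(y ∈ x ∧ ∀z(z ∈ y → z ∉ x)))`. -/
def foundAx : L.Sentence :=
  ∀' ((∃' (memB m &1 &0)) ⟹ ∃' (memB m &1 &0 ⊓ ∀' (memB m &2 &1 ⟹ ∼(memB m &2 &0))))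

/-- The separation axiom for a formula `φ` with free variables `v₀, …, vₙ₋₁` (parameters)
and `vₙ` (the separated variable): the universal closure of
`∀x∃y∀z(z ∈ y ↔ (z ∈ x ∧ φ(params, z)))`. -/
def sepAx (n : ℕ) (φ : L.BoundedFormula Empty (n + 1)) : L.Sentence :=
  ((∀' ∃' ∀' (memB m (v (n + 2) (by omega)) (v (n + 1) (by omega)) ⇔
      (memB m (v (n + 2) (by omega)) (v n (by omega)) ⊓ φ.liftAt 2 n)) :
    L.BoundedFormula Empty n)).alls

/-- The replacement axiom for a formula `φ` with free variables `v₀, …, vₙ₋₁` (parameters),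
`vₙ` (input) and `vₙ₊₁` (output): the universal closure of
`∀x((∀a(a ∈ x → ∃b(φ(a,b) ∧ ∀b'(φ(a,b') → b' = b)))) →
  ∃y∀b(b ∈ y ↔ ∃a∃b''(b'' = b ∧ a ∈ x ∧ φ(a,b''))))`. -/
def replAx (n : ℕ) (φ : L.BoundedFormula Empty (n + 2)) : L.Sentence :=
  ((∀' ((∀' (memB m (v (n + 1) (by omega)) (v n (by omega)) ⟹
        ∃' (φ.liftAt 1 n ⊓
          ∀' ((φ.liftAt 1 n).liftAt 1 (n + 2) ⟹
            Term.bdEqual (v (n + 3) (by omega)) (v (n + 2) (by omega)))))) ⟹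
      ∃' ∀' (memB m (v (n + 2) (by omega)) (v (n + 1) (by omega)) ⇔
        ∃' ∃' (Term.bdEqual (v (n + 4) (by omega)) (v (n + 2) (by omega)) ⊓
          (memB m (v (n + 3) (by omega)) (v n (by omega)) ⊓ φ.liftAt 3 n)))) :
    L.BoundedFormula Empty n)).alls

/-- The seven non-scheme axioms of ZF over a language with membership relation `m`. -/
def coreAxioms : Set L.Sentence :=
  {extAx m, emptyAx m, pairAx m, unionAx m, powerAx m, infAx m, foundAx m}

end Axioms

/-- The `L₀`-theory ZF: extensionality, empty set, pairing, union, power set, infinity,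
foundation, and the separation and replacement schemes over all `L₀`-formulas. -/
def ZF : L₀.Theory :=
  coreAxioms mem₀ ∪ (⋃ n : ℕ, Set.range (sepAx mem₀ n)) ∪
    (⋃ n : ℕ, Set.range (replAx mem₀ n))

/-- The Reduction Axiom restricted to `L'`: `∀x (br x = x)`. -/
def reductionAx : L'.Sentence := ∀' Term.bdEqual (Functions.apply₁ brS &0) &0

/-- The `L'`-theory `T`: the images under `incl` of the seven non-scheme ZF axioms,
the separation and replacement schemes over all `L'`-formulas, and the Reduction Axiom. -/
def T : L'.Theory :=
  incl.onSentence '' coreAxioms mem₀ ∪ (⋃ n : ℕ, Set.range (sepAx mem' n)) ∪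
    (⋃ n : ℕ, Set.range (replAx mem' n)) ∪ {reductionAx}
section AuxSem

open FirstOrder.Language.BoundedFormula FirstOrder.Language.Structure

lemma snoc_eval {α : Type*} {n : ℕ} (xs : Fin n → α) (a : α) (i : Fin (n + 1)) :
    (Fin.snoc xs a : Fin (n + 1) → α) i = if h : (i : ℕ) < n then xs ⟨i, h⟩ else a := by
  simp only [Fin.snoc]; split <;> rfl

lemma snoc_mk_eval {α : Type*} {n k : ℕ} (xs : Fin n → α) (a : α) (h : k < n + 1) :
    (Fin.snoc xs a : Fin (n + 1) → α) ⟨k, h⟩ = if h' : k < n then xs ⟨k, h'⟩ else a :=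
  snoc_eval xs a ⟨k, h⟩

lemma comp_sep {α : Type*} {n : ℕ} (p : Fin n → α) (x y z : α) :
    ((Fin.snoc (Fin.snoc (Fin.snoc p x) y) z : Fin (n + 3) → α) ∘ fun i : Fin (n + 1) =>
      if (i : ℕ) < n then Fin.castAdd 2 i else i.addNat 2) = Fin.snoc p z := by
  funext i
  simp only [Function.comp_apply, apply_ite (Fin.val), Fin.coe_castAdd, Fin.coe_addNat,
    snoc_eval, Fin.val_mk]
  split_ifs <;> first | rfl | omega

lemma comp_repl1 {α : Type*} {n : ℕ} (p : Fin n → α) (x a b : α) :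
    ((Fin.snoc (Fin.snoc (Fin.snoc p x) a) b : Fin (n + 3) → α) ∘ fun i : Fin (n + 2) =>
      if (i : ℕ) < n then Fin.castAdd 1 i else i.addNat 1) = Fin.snoc (Fin.snoc p a) b := by
  funext i
  simp only [Function.comp_apply, apply_ite (Fin.val), Fin.coe_castAdd, Fin.coe_addNat,
    snoc_eval, Fin.val_mk]
  split_ifs <;> first | rfl | omega

lemma comp_repl2 {α : Type*} {n : ℕ} (p : Fin n → α) (x a b b' : α) :
    (((Fin.snoc (Fin.snoc (Fin.snoc (Fin.snoc p x) a) b) b' : Fin (n + 4) → α) ∘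
        fun j : Fin (n + 3) =>
      if (j : ℕ) < n + 2 then Fin.castAdd 1 j else j.addNat 1) ∘ fun i : Fin (n + 2) =>
      if (i : ℕ) < n then Fin.castAdd 1 i else i.addNat 1) = Fin.snoc (Fin.snoc p a) b' := by
  funext i
  simp only [Function.comp_apply, apply_ite (Fin.val), Fin.coe_castAdd, Fin.coe_addNat,
    snoc_eval, Fin.val_mk]
  split_ifs <;> first | rfl | omega

lemma comp_repl3 {α : Type*} {n : ℕ} (p : Fin n → α) (x y b a b'' : α) :
    ((Fin.snoc (Fin.snoc (Fin.snoc (Fin.snoc (Fin.snoc p x) y) b) a) b'' : Fin (n + 5) → α) ∘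
      fun i : Fin (n + 2) =>
      if (i : ℕ) < n then Fin.castAdd 3 i else i.addNat 3) = Fin.snoc (Fin.snoc p a) b'' := by
  funext i
  simp only [Function.comp_apply, apply_ite (Fin.val), Fin.coe_castAdd, Fin.coe_addNat,
    snoc_eval, Fin.val_mk]
  split_ifs <;> first | rfl | omega

variable {L : Language} {M : Type u} [L.Structure M] [Nonempty M] (m : L.Relations 2)

set_option linter.unusedSectionVars false

lemma realize_sepAx {n : ℕ} (φ : L.BoundedFormula Empty (n + 1)) :
    (M ⊨ sepAx m n φ) ↔ ∀ (p : Fin n → M) (x : M), ∃ y : M, ∀ z : M,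
      RelMap m ![z, y] ↔ (RelMap m ![z, x] ∧ φ.Realize default (Fin.snoc p z)) := by
  simp only [sepAx, memB, v, Sentence.Realize, realize_alls, realize_all,
    realize_ex, realize_iff, realize_inf, realize_rel₂, Term.realize_var, Sum.elim_inr,
    realize_liftAt (show n ≤ n + 1 by omega), comp_sep]
  simp (disch := omega) only [snoc_mk_eval, dif_pos, dif_neg]

lemma realize_replAx {n : ℕ} (φ : L.BoundedFormula Empty (n + 2)) :
    (M ⊨ replAx m n φ) ↔ ∀ (p : Fin n → M) (x : M),
      (∀ a : M, RelMap m ![a, x] →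
        ∃ b : M, φ.Realize default (Fin.snoc (Fin.snoc p a) b) ∧
          ∀ b' : M, φ.Realize default (Fin.snoc (Fin.snoc p a) b') → b' = b) →
      ∃ y : M, ∀ b : M, RelMap m ![b, y] ↔ ∃ a : M, ∃ b'' : M, b'' = b ∧
        (RelMap m ![a, x] ∧ φ.Realize default (Fin.snoc (Fin.snoc p a) b'')) := by
  simp only [replAx, memB, v, Sentence.Realize, realize_alls, realize_all,
    realize_ex, realize_iff, realize_imp, realize_inf, realize_rel₂, realize_bdEqual,
    Term.realize_var, Sum.elim_inr,
    realize_liftAt (show n ≤ n + 2 by omega),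
    realize_liftAt (show n + 2 ≤ n + 3 by omega),
    realize_liftAt (show n ≤ n + 2 by omega),
    comp_repl1, comp_repl2, comp_repl3]
  simp (disch := omega) only [snoc_mk_eval, dif_pos, dif_neg]

end AuxSem
section Transfer

open FirstOrder.Language.BoundedFormula FirstOrder.Language.Structure

lemma sepAx_transfer {L₁ L₂ : Language} {M : Type u} [L₁.Structure M] [L₂.Structure M]
    [Nonempty M] {m₁ : L₁.Relations 2} {m₂ : L₂.Relations 2}
    (hm : ∀ a b : M, RelMap m₂ ![a, b] ↔ RelMap m₁ ![a, b])
    {n : ℕ} {φ₁ : L₁.BoundedFormula Empty (n + 1)} {φ₂ : L₂.BoundedFormula Empty (n + 1)}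
    (hφ : ∀ xs, φ₂.Realize (default : Empty → M) xs ↔ φ₁.Realize default xs)
    (h : M ⊨ sepAx m₁ n φ₁) : M ⊨ sepAx m₂ n φ₂ := by
  rw [realize_sepAx] at h ⊢
  simp only [hm, hφ]
  exact h

lemma replAx_transfer {L₁ L₂ : Language} {M : Type u} [L₁.Structure M] [L₂.Structure M]
    [Nonempty M] {m₁ : L₁.Relations 2} {m₂ : L₂.Relations 2}
    (hm : ∀ a b : M, RelMap m₂ ![a, b] ↔ RelMap m₁ ![a, b])
    {n : ℕ} {φ₁ : L₁.BoundedFormula Empty (n + 2)} {φ₂ : L₂.BoundedFormula Empty (n + 2)}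
    (hφ : ∀ xs, φ₂.Realize (default : Empty → M) xs ↔ φ₁.Realize default xs)
    (h : M ⊨ replAx m₁ n φ₁) : M ⊨ replAx m₂ n φ₂ := by
  rw [realize_replAx] at h ⊢
  simp only [hm, hφ]
  exact h

end Transfer

section Structures

open FirstOrder.Language.BoundedFormula FirstOrder.Language.Structure

/-- Expansion of an `L₀`-structure to `L'` interpreting `br` as the identity. -/
def idStruc (M : Type u) [L₀.Structure M] : L'.Structure M where
  funMap := fun {n} f x => match f with | BrFun.br => x 0
  RelMap := fun {n} r x => Structure.RelMap (L := L₀) (M := M) r x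

/-- The reduct of an `L'`-structure to `L₀`. -/
def reStruc (M : Type u) [L'.Structure M] : L₀.Structure M where
  funMap := fun {n} f _ => Empty.elim f
  RelMap := fun {n} r x => Structure.RelMap (L := L') (M := M) r x

lemma idStruc_expansion (M : Type u) [L₀.Structure M] :
    @FirstOrder.Language.LHom.IsExpansionOn L₀ L' incl M _ (idStruc M) :=
  letI := idStruc M
  { map_onFunction := fun {n} f _ => Empty.elim f
    map_onRelation := fun {n} _ _ => rfl }

lemma reStruc_expansion (M : Type u) [L'.Structure M] :
    @FirstOrder.Language.LHom.IsExpansionOn L₀ L' incl M (reStruc M) _ :=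
  letI := reStruc M
  { map_onFunction := fun {n} f _ => Empty.elim f
    map_onRelation := fun {n} _ _ => rfl }

/-- Collapse of `br` in terms. -/
def reduceTerm {α : Type*} : L'.Term α → L₀.Term α
  | Term.var a => Term.var a
  | Term.func f ts => match f with
    | BrFun.br => reduceTerm (ts 0)

/-- Collapse of `br` in bounded formulas. -/
def reduceBF {n : ℕ} : L'.BoundedFormula Empty n → L₀.BoundedFormula Empty n :=
  BoundedFormula.mapTermRel (fun _ t => reduceTerm t) (fun _ r => r) (fun _ => id)

lemma realize_reduceTerm {M : Type u} [L₀.Structure M] {α : Type*} (t : L'.Term α) (v : α → M) :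
    (reduceTerm t).realize v = @Term.realize L' M (idStruc M) α v t := by
  induction t with
  | var a => rfl
  | func f ts ih =>
    cases f with
    | br => exact ih 0

lemma realize_reduceBF {M : Type u} [L₀.Structure M] {n : ℕ} (ψ : L'.BoundedFormula Empty n)
    (v : Empty → M) (xs : Fin n → M) :
    (reduceBF ψ).Realize v xs ↔ @BoundedFormula.Realize L' M (idStruc M) Empty n ψ v xs := by
  letI := idStruc M
  exact realize_mapTermRel_id (fun n t xs => realize_reduceTerm t _) (fun n R x => rfl)

end Structures

/-- `T` is a conservative extension of ZF: for every `L₀`-sentence `φ`,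
`T ⊨ φ'` iff `ZF ⊨ φ`, where `φ'` is the image of `φ` under the inclusion `L₀ ↪ L'`. -/
theorem T_conservative_over_ZF (φ : L₀.Sentence) :
    (∀ (M : Type u) [L'.Structure M] [Nonempty M], M ⊨ T → M ⊨ incl.onSentence φ) ↔
      (∀ (M : Type u) [L₀.Structure M] [Nonempty M], M ⊨ ZF → M ⊨ φ) := by
  constructor
  · intro hT M _ _ hZF
    letI : L'.Structure M := idStruc M
    haveI : incl.IsExpansionOn M := idStruc_expansion M
    haveI : M ⊨ ZF := hZF
    have hMT : M ⊨ T := by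
      rw [Theory.model_iff]
      intro ψ hψ
      simp only [T, Set.mem_union, Set.mem_image, Set.mem_iUnion, Set.mem_range,
        Set.mem_singleton_iff] at hψ
      rcases hψ with (((⟨χ, hχ, rfl⟩ | ⟨n, χ, rfl⟩) | ⟨n, χ, rfl⟩) | rfl)
      · exact (incl.realize_onSentence (M := M) χ).2
          (Theory.realize_sentence_of_mem (T := ZF) (Or.inl (Or.inl hχ)))
      · exact sepAx_transfer (m₂ := mem') (φ₂ := χ) (m₁ := mem₀) (φ₁ := reduceBF χ)
          (fun a b => Iff.rfl)
          (fun xs => (realize_reduceBF χ default xs).symm)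
          (Theory.realize_sentence_of_mem (T := ZF)
            (Or.inl (Or.inr (Set.mem_iUnion.2 ⟨n, Set.mem_range_self _⟩))))
      · exact replAx_transfer (m₂ := mem') (φ₂ := χ) (m₁ := mem₀) (φ₁ := reduceBF χ)
          (fun a b => Iff.rfl)
          (fun xs => (realize_reduceBF χ default xs).symm)
          (Theory.realize_sentence_of_mem (T := ZF)
            (Or.inr (Set.mem_iUnion.2 ⟨n, Set.mem_range_self _⟩)))
      · simp only [reductionAx, Sentence.Realize, BoundedFormula.realize_all,
          BoundedFormula.realize_bdEqual, Term.realize_functions_apply₁]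
        intro x
        rfl
    exact (incl.realize_onSentence (M := M) φ).1 (hT M hMT)
  · intro h M _ _ hMT
    letI : L₀.Structure M := reStruc M
    haveI : incl.IsExpansionOn M := reStruc_expansion M
    have hZF : M ⊨ ZF := by
      rw [Theory.model_iff]
      intro ψ hψ
      simp only [ZF, Set.mem_union, Set.mem_iUnion, Set.mem_range] at hψ
      rcases hψ with ((hcore | ⟨n, χ, rfl⟩) | ⟨n, χ, rfl⟩)
      · exact (incl.realize_onSentence (M := M) ψ).1
          (hMT.realize_of_mem _ (Or.inl (Or.inl (Or.inl ⟨ψ, hcore, rfl⟩))))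
      · exact sepAx_transfer (m₂ := mem₀) (φ₂ := χ) (m₁ := mem')
          (φ₁ := incl.onBoundedFormula χ)
          (fun a b => Iff.rfl)
          (fun xs => (incl.realize_onBoundedFormula (M := M) χ).symm)
          (hMT.realize_of_mem _
            (Or.inl (Or.inl (Or.inr (Set.mem_iUnion.2 ⟨n, Set.mem_range_self _⟩)))))
      · exact replAx_transfer (m₂ := mem₀) (φ₂ := χ) (m₁ := mem')
          (φ₁ := incl.onBoundedFormula χ)
          (fun a b => Iff.rfl)
          (fun xs => (incl.realize_onBoundedFormula (M := M) χ).symm)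
          (hMT.realize_of_mem _
            (Or.inl (Or.inr (Set.mem_iUnion.2 ⟨n, Set.mem_range_self _⟩))))
    exact (incl.realize_onSentence (M := M) φ).2 (h M hZF)

end SMTPaper
end

section
/- For every L₀-structure M that is a model of ZF, the L'-structure on the same carrier that interprets ∈' as in M and interprets br as the identity function is a model of T. -/
/-!
Statement 1: the expansion of a ZF-model by interpreting `br` as the identity is a model of `T`.
-/

open FirstOrder FirstOrder.Language

universe u

namespace SMTPaper

/-- The `L'`-structure on the carrier of an `L₀`-structure `M` that interprets the
membership relation as in `M` and interprets `br` as the identity function. -/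
def extendStr (M : Type u) [S : L₀.Structure M] : L'.Structure M where
  funMap := fun {n} f xs =>
    match n, f with
    | 1, BrFun.br => xs 0
  RelMap := fun {n} r xs => Structure.RelMap (L := L₀) (M := M) r xs

section Translation

attribute [local instance] extendStr

open BoundedFormula

/-- The unique variable occurring in an `L'`-term. -/
def tvar {α : Type*} : L'.Term α → α
  | Term.var a => a
  | Term.func BrFun.br ts => tvar (ts 0)

theorem tvar_relabel {α β : Type*} (g : α → β) :
    ∀ t : L'.Term α, tvar (t.relabel g) = g (tvar t)
  | Term.var _ => rfl
  | Term.func BrFun.br ts => tvar_relabel g (ts 0)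

/-- The translation of an `L'`-formula to an `L₀`-formula, replacing each term by its
unique variable. -/
def toL0 : ∀ {n}, L'.BoundedFormula Empty n → L₀.BoundedFormula Empty n
  | _, BoundedFormula.falsum => BoundedFormula.falsum
  | _, BoundedFormula.equal t u =>
      BoundedFormula.equal (Term.var (tvar t)) (Term.var (tvar u))
  | _, BoundedFormula.rel R ts => BoundedFormula.rel R fun i => Term.var (tvar (ts i))
  | _, BoundedFormula.imp φ ψ => (toL0 φ).imp (toL0 ψ)
  | _, BoundedFormula.all φ => (toL0 φ).all

@[simp] theorem toL0_imp {n} (φ ψ : L'.BoundedFormula Empty n) :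
    toL0 (φ.imp ψ) = (toL0 φ).imp (toL0 ψ) := rfl

@[simp] theorem toL0_all {n} (φ : L'.BoundedFormula Empty (n + 1)) :
    toL0 (∀' φ) = ∀' (toL0 φ) := rfl

@[simp] theorem toL0_ex {n} (φ : L'.BoundedFormula Empty (n + 1)) :
    toL0 (∃' φ) = ∃' (toL0 φ) := rfl

@[simp] theorem toL0_not {n} (φ : L'.BoundedFormula Empty n) :
    toL0 φ.not = (toL0 φ).not := rfl

@[simp] theorem toL0_inf {n} (φ ψ : L'.BoundedFormula Empty n) :
    toL0 (φ ⊓ ψ) = toL0 φ ⊓ toL0 ψ := rfl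

@[simp] theorem toL0_sup {n} (φ ψ : L'.BoundedFormula Empty n) :
    toL0 (φ ⊔ ψ) = toL0 φ ⊔ toL0 ψ := rfl

@[simp] theorem toL0_iff {n} (φ ψ : L'.BoundedFormula Empty n) :
    toL0 (φ.iff ψ) = (toL0 φ).iff (toL0 ψ) := rfl

@[simp] theorem toL0_bdEqual_v {k a b : ℕ} (ha : a < k) (hb : b < k) :
    toL0 (Term.bdEqual (v a ha) (v b hb)) = Term.bdEqual (v a ha) (v b hb) := rfl

@[simp] theorem toL0_memB {k a b : ℕ} (ha : a < k) (hb : b < k) :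
    toL0 (memB mem' (v a ha) (v b hb)) = memB mem₀ (v a ha) (v b hb) := by
  simp only [memB, Relations.boundedFormula₂, Relations.boundedFormula, toL0]
  congr 1
  funext i
  fin_cases i <;> rfl

theorem toL0_castLE : ∀ {m n : ℕ} (h : m ≤ n) (φ : L'.BoundedFormula Empty m),
    toL0 (φ.castLE h) = (toL0 φ).castLE h
  | _, _, _, BoundedFormula.falsum => rfl
  | _, _, h, BoundedFormula.equal t u => by
      simp [BoundedFormula.castLE, toL0, tvar_relabel]
  | _, _, h, BoundedFormula.rel R ts => by
      simp only [BoundedFormula.castLE, toL0]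
      congr 1
      funext i
      simp [tvar_relabel]
  | _, _, h, BoundedFormula.imp φ ψ => by
      simp [BoundedFormula.castLE, toL0, toL0_castLE h φ, toL0_castLE h ψ]
  | _, _, h, BoundedFormula.all φ => by
      simp [BoundedFormula.castLE, toL0, toL0_castLE _ φ]

@[simp] theorem toL0_liftAt : ∀ {n : ℕ} (n' m : ℕ) (φ : L'.BoundedFormula Empty n),
    toL0 (φ.liftAt n' m) = (toL0 φ).liftAt n' m
  | _, _, _, BoundedFormula.falsum => rfl
  | _, n', m, BoundedFormula.equal t u => by
      simp [BoundedFormula.liftAt, BoundedFormula.mapTermRel, Term.liftAt, toL0, tvar_relabel]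
  | _, n', m, BoundedFormula.rel R ts => by
      simp [BoundedFormula.liftAt, BoundedFormula.mapTermRel, Term.liftAt, toL0,
        Function.comp, tvar_relabel]
      rfl
  | _, n', m, BoundedFormula.imp φ ψ => by
      simp only [BoundedFormula.liftAt, BoundedFormula.mapTermRel, toL0]
      rw [← BoundedFormula.liftAt, ← BoundedFormula.liftAt, toL0_liftAt n' m φ,
        toL0_liftAt n' m ψ]
      rfl
  | _, n', m, BoundedFormula.all φ => by
      simp only [BoundedFormula.liftAt, BoundedFormula.mapTermRel, toL0]
      rw [← BoundedFormula.liftAt, toL0_castLE, toL0_liftAt n' m φ]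
      rfl

theorem toL0_alls : ∀ {n} (φ : L'.BoundedFormula Empty n), toL0 φ.alls = (toL0 φ).alls
  | 0, _ => rfl
  | _ + 1, φ => toL0_alls φ.all

theorem toL0_sepAx (n : ℕ) (φ : L'.BoundedFormula Empty (n + 1)) :
    toL0 (sepAx mem' n φ) = sepAx mem₀ n (toL0 φ) := by
  unfold sepAx
  rw [toL0_alls]
  congr 1
  simp

theorem toL0_replAx (n : ℕ) (φ : L'.BoundedFormula Empty (n + 2)) :
    toL0 (replAx mem' n φ) = replAx mem₀ n (toL0 φ) := by
  unfold replAx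
  rw [toL0_alls]
  congr 1
  simp

variable {M : Type u} [L₀.Structure M]

theorem realize_tvar {α : Type*} (vv : α → M) :
    ∀ t : L'.Term α, Term.realize vv t = vv (tvar t)
  | Term.var _ => rfl
  | Term.func BrFun.br ts => realize_tvar vv (ts 0)

theorem realize_toL0 {n} (φ : L'.BoundedFormula Empty n) :
    ∀ (vv : Empty → M) (xs : Fin n → M), φ.Realize vv xs ↔ (toL0 φ).Realize vv xs := by
  induction φ with
  | falsum => intro vv xs; exact Iff.rfl
  | equal t u =>
      intro vv xs
      simp only [toL0, BoundedFormula.Realize, realize_tvar]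
      exact Iff.rfl
  | rel R ts =>
      intro vv xs
      simp only [toL0, BoundedFormula.Realize, realize_tvar]
      exact Iff.rfl
  | imp φ ψ ihφ ihψ => intro vv xs; exact imp_congr (ihφ vv xs) (ihψ vv xs)
  | all φ ih => intro vv xs; exact forall_congr' fun a => ih vv _

theorem realize_toL0_sentence (σ : L'.Sentence) :
    M ⊨ σ ↔ M ⊨ toL0 σ :=
  realize_toL0 σ _ _

end Translation

/-- For every `L₀`-structure `M` that is a model of ZF, the `L'`-structure
on the same carrier interpreting membership as in `M` and `br` as the identity is a model
of `T`. -/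
theorem extendStr_model_T (M : Type u) [L₀.Structure M] [Nonempty M] (h : M ⊨ ZF) :
    @Theory.Model L' M (extendStr M) T := by
  letI : L'.Structure M := extendStr M
  haveI : incl.IsExpansionOn M := ⟨fun {n} f _ => f.elim, fun {n} R xs => rfl⟩
  rw [Theory.model_iff]
  intro σ hσ
  rcases hσ with ((hcore | hsep) | hrepl) | hred
  · rcases hcore with ⟨ψ, hψ, rfl⟩
    rw [LHom.realize_onSentence]
    exact h.realize_of_mem ψ (Or.inl (Or.inl hψ))
  · rcases Set.mem_iUnion.1 hsep with ⟨n, φ, rfl⟩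
    rw [realize_toL0_sentence, toL0_sepAx]
    exact h.realize_of_mem _ (Or.inl (Or.inr (Set.mem_iUnion.2 ⟨n, Set.mem_range_self _⟩)))
  · rcases Set.mem_iUnion.1 hrepl with ⟨n, φ, rfl⟩
    rw [realize_toL0_sentence, toL0_replAx]
    exact h.realize_of_mem _ (Or.inr (Set.mem_iUnion.2 ⟨n, Set.mem_range_self _⟩))
  · rcases hred with rfl
    intro x
    rfl

end SMTPaper
end

section
/- In every SMT-structure satisfying (Empty), (Pair) and (NotSet), there exist sets x and y with x ≠ y such that no set is an element of x and no set is an element of y. Consequently the ZF theorem 'there is exactly one set having no sets as elements' fails in SMT, so SMT is not an extension of ZF. -/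
/-!
Statement 3: in every SMT-structure satisfying (Empty), (Pair) and (NotSet), there exist
two distinct sets neither of which has any set as an element.  Hence the ZF theorem
"there is exactly one set having no sets as elements" fails in SMT, so SMT is not an
extension of ZF.
-/

theorem two_sets_without_set_elements {V : Type*} (mem : V → V → Prop) (IsSet : V → Prop)
    (mat : ∀ m n : ℕ, (Fin m → Fin n → V) → V)
    (hEmpty : ∃ e, IsSet e ∧ ∀ α, ¬ mem α e)
    (hPair : ∀ α β, ∃ p, IsSet p ∧ ∀ γ, mem γ p ↔ γ = α ∨ γ = β)
    (hNotSet : ∀ (m n : ℕ) (A : Fin m → Fin n → V), 2 ≤ m * n →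
      (∀ i j, IsSet (A i j)) → ¬ IsSet (mat m n A)) :
    ∃ x y, IsSet x ∧ IsSet y ∧ x ≠ y ∧
      (∀ z, IsSet z → ¬ mem z x) ∧ (∀ z, IsSet z → ¬ mem z y) := by
  obtain ⟨e, he, hemem⟩ := hEmpty
  set u := mat 1 2 (fun _ _ => e) with hu
  have hunot : ¬ IsSet u := hNotSet 1 2 _ (by norm_num) (fun _ _ => he)
  obtain ⟨p, hp, hpmem⟩ := hPair u u
  refine ⟨e, p, he, hp, ?_, fun z _ => hemem z, fun z hz hzp => ?_⟩
  · intro h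
    have : mem u p := (hpmem u).2 (Or.inl rfl)
    exact hemem u (h ▸ this)
  · rcases (hpmem z).1 hzp with rfl | rfl <;> exact hunot hz
end

section
/- In every SMT-structure satisfying (ExtSet), (Empty), (Pair), (Sum), (Sep), (Inf) and (NotSet), there exist sets w₁ and w₂ with w₁ ≠ w₂ such that for each i: e ∈ wᵢ, where e is the unique set with no elements, and for every set y with y ∈ wᵢ, the unique set s with ∀γ (γ ∈ s ↔ γ = y) satisfies s ∈ wᵢ. That is, more than one set satisfies the Generalized Axiom of Countable Infinity. -/
/-!
Statement 4: in every SMT-structure satisfying (ExtSet), (Empty), (Pair), (Sum), (Sep),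
(Inf) and (NotSet), more than one set satisfies the Generalized Axiom of Countable
Infinity: there are two distinct sets `w₁ ≠ w₂` such that each `wᵢ` contains the unique
empty set `e` and is closed under the singleton (successor) operation `y ↦ {y}`.
-/

theorem two_infinity_witnesses {V : Type*} (mem : V → V → Prop) (IsSet : V → Prop)
    (mat : ∀ m n : ℕ, (Fin m → Fin n → V) → V)
    (hExtSet : ∀ x y, IsSet x → IsSet y → (∀ α, mem α x ↔ mem α y) → x = y)
    (hEmpty : ∃ e, IsSet e ∧ ∀ α, ¬ mem α e)
    (hPair : ∀ α β, ∃ p, IsSet p ∧ ∀ γ, mem γ p ↔ γ = α ∨ γ = β)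
    (hSum : ∀ x, IsSet x → (∀ α, mem α x → IsSet α) →
      ∃ u, IsSet u ∧ ∀ β, mem β u ↔ ∃ z, mem z x ∧ mem β z)
    (hSep : ∀ x, IsSet x → ∀ Φ : V → Prop,
      ∃ y, IsSet y ∧ ∀ α, mem α y ↔ mem α x ∧ Φ α)
    (hInf : ∃ w, IsSet w ∧ (∀ e, IsSet e → (∀ α, ¬ mem α e) → mem e w) ∧
      ∀ y, IsSet y → mem y w → ∃ s, IsSet s ∧ mem s w ∧ ∀ γ, mem γ s ↔ γ = y)
    (hNotSet : ∀ (m n : ℕ) (A : Fin m → Fin n → V), 2 ≤ m * n →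
      (∀ i j, IsSet (A i j)) → ¬ IsSet (mat m n A)) :
    ∃ w₁ w₂, IsSet w₁ ∧ IsSet w₂ ∧ w₁ ≠ w₂ ∧
      ((∀ e, IsSet e → (∀ α, ¬ mem α e) → mem e w₁) ∧
        ∀ y, IsSet y → mem y w₁ →
          ∀ s, IsSet s → (∀ γ, mem γ s ↔ γ = y) → mem s w₁) ∧
      ((∀ e, IsSet e → (∀ α, ¬ mem α e) → mem e w₂) ∧
        ∀ y, IsSet y → mem y w₂ →
          ∀ s, IsSet s → (∀ γ, mem γ s ↔ γ = y) → mem s w₂) := by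
  obtain ⟨e, he, heE⟩ := hEmpty
  obtain ⟨w, hw, hwE, hwS⟩ := hInf
  set ν := mat 1 2 (fun _ _ => e) with hνdef
  have hν : ¬ IsSet ν := hNotSet 1 2 _ (by norm_num) (fun _ _ => he)
  obtain ⟨a, ha, haM⟩ := hSep w hw (fun α => IsSet α)
  -- a = sets of w
  obtain ⟨p, hp, hpM⟩ := hPair ν ν
  obtain ⟨q, hq, hqM⟩ := hPair a p
  have hqSets : ∀ α, mem α q → IsSet α := by
    intro α hα
    rcases (hqM α).1 hα with h | h <;> subst h <;> assumption
  obtain ⟨b, hb, hbM⟩ := hSum q hq hqSets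
  have hbM' : ∀ β, mem β b ↔ mem β a ∨ β = ν := by
    intro β
    rw [hbM]
    constructor
    · rintro ⟨z, hz, hβz⟩
      rcases (hqM z).1 hz with h | h
      · subst h; exact Or.inl hβz
      · subst h; rcases (hpM β).1 hβz with h | h <;> exact Or.inr h
    · rintro (h | h)
      · exact ⟨a, (hqM a).2 (Or.inl rfl), h⟩
      · exact ⟨p, (hqM p).2 (Or.inr rfl), (hpM β).2 (Or.inl h)⟩
  have hνa : ¬ mem ν a := fun h => hν ((haM ν).1 h).2
  have hne : a ≠ b := by
    intro h
    exact hνa (h ▸ (hbM' ν).2 (Or.inr rfl))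
  have heIn : mem e a := (haM e).2 ⟨hwE e he heE, he⟩
  -- closure of a
  have haCl : ∀ y, IsSet y → mem y a → ∀ s, IsSet s → (∀ γ, mem γ s ↔ γ = y) → mem s a := by
    intro y hy hya s hs hsM
    obtain ⟨s₀, hs₀, hs₀w, hs₀M⟩ := hwS y hy ((haM y).1 hya).1
    have : s = s₀ := hExtSet s s₀ hs hs₀ (fun γ => (hsM γ).trans (hs₀M γ).symm)
    subst this
    exact (haM s).2 ⟨hs₀w, hs⟩
  have heInb : mem e b := (hbM' e).2 (Or.inl heIn)
  refine ⟨a, b, ha, hb, hne, ⟨?_, ?_⟩, ⟨?_, ?_⟩⟩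
  · intro e' he' he'E
    have : e' = e := hExtSet e' e he' he (fun α => by simp [he'E α, heE α])
    exact this ▸ heIn
  · exact haCl
  · intro e' he' he'E
    have : e' = e := hExtSet e' e he' he (fun α => by simp [he'E α, heE α])
    exact this ▸ heInb
  · intro y hy hyb s hs hsM
    rcases (hbM' y).1 hyb with h | h
    · exact (hbM' s).2 (Or.inl (haCl y hy h s hs hsM))
    · exact absurd (h ▸ hy) hν
end

section
/- In every SMT-structure satisfying (ExtSet), (Pair), (Sum), (SetOfMat) and (Sep), for all sets x and y there is exactly one set p such that for every α, α ∈ p ↔ there exist β and γ with β ∈ x, γ ∈ y and α = mat 1 2 (β, γ), the 1×2 matrix with entries β and γ. (Existence and uniqueness of the Cartesian product x × y in SMT.) -/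
/-!
Statement 5: in every SMT-structure satisfying (ExtSet), (Pair), (Sum), (SetOfMat) and
(Sep), for all sets `x` and `y` there is exactly one set `p` such that for every `α`,
`α ∈ p ↔ ∃ β γ, β ∈ x ∧ γ ∈ y ∧ α = mat 1 2 (β, γ)`: the Cartesian product `x × y`
exists and is unique in SMT.
-/

theorem cartesianProduct_exists_unique {V : Type*} (mem : V → V → Prop) (IsSet : V → Prop)
    (mat : ∀ m n : ℕ, (Fin m → Fin n → V) → V)
    (hExtSet : ∀ x y, IsSet x → IsSet y → (∀ α, mem α x ↔ mem α y) → x = y)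
    (hPair : ∀ α β, ∃ p, IsSet p ∧ ∀ γ, mem γ p ↔ γ = α ∨ γ = β)
    (hSum : ∀ x, IsSet x → (∀ α, mem α x → IsSet α) →
      ∃ u, IsSet u ∧ ∀ β, mem β u ↔ ∃ z, mem z x ∧ mem β z)
    (hSetOfMat : ∀ x, IsSet x → ∀ m n : ℕ, 0 < m → 0 < n →
      ∃ M, IsSet M ∧ ∀ β, mem β M ↔
        ∃ A : Fin m → Fin n → V, (∀ i j, mem (A i j) x) ∧ β = mat m n A)
    (hSep : ∀ x, IsSet x → ∀ Φ : V → Prop,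
      ∃ y, IsSet y ∧ ∀ α, mem α y ↔ mem α x ∧ Φ α) :
    ∀ x y, IsSet x → IsSet y →
      ∃! p, IsSet p ∧ ∀ α, mem α p ↔
        ∃ β γ, mem β x ∧ mem γ y ∧ α = mat 1 2 ![![β, γ]] := by

  intro x y hx hy
  -- union of x and y
  obtain ⟨q, hq, hqmem⟩ := hPair x y
  obtain ⟨u, hu, humem⟩ := hSum q hq (by
    intro α hα
    rcases (hqmem α).1 hα with rfl | rfl <;> assumption)
  have hxu : ∀ β, mem β x → mem β u := fun β hβ =>
    (humem β).2 ⟨x, (hqmem x).2 (Or.inl rfl), hβ⟩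
  have hyu : ∀ γ, mem γ y → mem γ u := fun γ hγ =>
    (humem γ).2 ⟨y, (hqmem y).2 (Or.inr rfl), hγ⟩
  obtain ⟨M, hM, hMmem⟩ := hSetOfMat u hu 1 2 one_pos two_pos
  obtain ⟨p, hp, hpmem⟩ := hSep M hM
    (fun α => ∃ β γ, mem β x ∧ mem γ y ∧ α = mat 1 2 ![![β, γ]])
  refine ⟨p, ⟨hp, fun α => ?_⟩, ?_⟩
  · constructor
    · intro hα
      exact ((hpmem α).1 hα).2
    · rintro ⟨β, γ, hβ, hγ, rfl⟩
      refine (hpmem _).2 ⟨(hMmem _).2 ⟨![![β, γ]], fun i j => ?_, rfl⟩,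
        β, γ, hβ, hγ, rfl⟩
      fin_cases i <;> fin_cases j
      · exact hxu β hβ
      · exact hyu γ hγ
  · rintro p' ⟨hp', hmem'⟩
    exact hExtSet p' p hp' hp fun α => (hmem' α).trans
      (Iff.symm (by
        constructor
        · intro hα; exact ((hpmem α).1 hα).2
        · rintro ⟨β, γ, hβ, hγ, rfl⟩
          exact (hpmem _).2 ⟨(hMmem _).2 ⟨![![β, γ]], fun i j => by
            fin_cases i <;> fin_cases j
            · exact hxu β hβ
            · exact hyu γ hγ, rfl⟩, β, γ, hβ, hγ, rfl⟩))
end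

section
/- In every SMT-structure satisfying (ExtSet), (Pair), (Sum), (SetOfMat), (Sep) and (Pow), for all sets x and y there is a set F such that for every α: α ∈ F if and only if α is a set, every element of α belongs to the Cartesian product p of x and y (the unique set with: for every δ, δ ∈ p ↔ there exist β ∈ x and γ ∈ y with δ = mat 1 2 (β, γ)), and for every β with β ∈ x there is exactly one γ with γ ∈ y and mat 1 2 (β, γ) ∈ α. (Existence of the function space y^x in SMT.) -/
/-!
Statement 6: in every SMT-structure satisfying (ExtSet), (Pair), (Sum), (SetOfMat), (Sep)
and (Pow), for all sets `x` and `y` there is a set `F` (the function space `y^x`) such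
that for every `α`: `α ∈ F` iff `α` is a set, every element of `α` belongs to the
Cartesian product `p` of `x` and `y`, and for every `β ∈ x` there is exactly one `γ ∈ y`
with `mat 1 2 (β, γ) ∈ α`.
-/

theorem functionSpace_exists {V : Type*} (mem : V → V → Prop) (IsSet : V → Prop)
    (mat : ∀ m n : ℕ, (Fin m → Fin n → V) → V)
    (hExtSet : ∀ x y, IsSet x → IsSet y → (∀ α, mem α x ↔ mem α y) → x = y)
    (hPair : ∀ α β, ∃ p, IsSet p ∧ ∀ γ, mem γ p ↔ γ = α ∨ γ = β)
    (hSum : ∀ x, IsSet x → (∀ α, mem α x → IsSet α) →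
      ∃ u, IsSet u ∧ ∀ β, mem β u ↔ ∃ z, mem z x ∧ mem β z)
    (hSetOfMat : ∀ x, IsSet x → ∀ m n : ℕ, 0 < m → 0 < n →
      ∃ M, IsSet M ∧ ∀ β, mem β M ↔
        ∃ A : Fin m → Fin n → V, (∀ i j, mem (A i j) x) ∧ β = mat m n A)
    (hSep : ∀ x, IsSet x → ∀ Φ : V → Prop,
      ∃ y, IsSet y ∧ ∀ α, mem α y ↔ mem α x ∧ Φ α)
    (hPow : ∀ x, IsSet x →
      ∃ P, IsSet P ∧ ∀ z, mem z P ↔ IsSet z ∧ ∀ w, mem w z → mem w x) :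
    ∀ x y, IsSet x → IsSet y →
      ∀ p, IsSet p →
        (∀ δ, mem δ p ↔ ∃ β γ, mem β x ∧ mem γ y ∧ δ = mat 1 2 ![![β, γ]]) →
        ∃ F, IsSet F ∧ ∀ α, mem α F ↔
          (IsSet α ∧ (∀ w, mem w α → mem w p) ∧
            ∀ β, mem β x → ∃! γ, mem γ y ∧ mem (mat 1 2 ![![β, γ]]) α) := by
  intro x y hx hy p hp hpmem
  obtain ⟨P, hP, hPmem⟩ := hPow p hp
  obtain ⟨F, hF, hFmem⟩ := hSep P hP
    (fun α => ∀ β, mem β x → ∃! γ, mem γ y ∧ mem (mat 1 2 ![![β, γ]]) α)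
  refine ⟨F, hF, fun α => ?_⟩
  rw [hFmem, hPmem]
  tauto
end

section
/- For all x y z : ZFSet, if x, y and z are nonempty, then ZFSet.prod (ZFSet.prod x y) z ≠ ZFSet.prod x (ZFSet.prod y z); that is, in ZF the sets (x × y) × z and x × (y × z) are different sets. -/
/-!
Statement 7: for all nonempty ZF sets `x`, `y`, `z`, the sets `(x × y) × z` and
`x × (y × z)` (Cartesian products via Kuratowski pairs) are different.
-/

theorem prod_prod_ne_prod_prod (x y z : ZFSet)
    (hx : ∃ a, a ∈ x) (hy : ∃ b, b ∈ y) (hz : ∃ c, c ∈ z) :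
    ZFSet.prod (ZFSet.prod x y) z ≠ ZFSet.prod x (ZFSet.prod y z) := by
  obtain ⟨a, ha⟩ := hx
  obtain ⟨b, hb⟩ := hy
  obtain ⟨c, hc⟩ := hz
  intro h
  -- Key: every element of x is a Kuratowski pair whose first component is in x.
  have key : ∀ a, a ∈ x → ∃ a', a' ∈ x ∧ ∃ b', a = ZFSet.pair a' b' := by
    intro a ha
    have hmem : ZFSet.pair a (ZFSet.pair b c) ∈
        ZFSet.prod (ZFSet.prod x y) z := by
      rw [h]
      exact ZFSet.pair_mem_prod.2 ⟨ha, ZFSet.pair_mem_prod.2 ⟨hb, hc⟩⟩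
    rw [ZFSet.mem_prod] at hmem
    obtain ⟨p, hp, c', _, heq⟩ := hmem
    obtain ⟨hap, -⟩ := ZFSet.pair_injective heq
    rw [ZFSet.mem_prod] at hp
    obtain ⟨a', ha', b', _, hpe⟩ := hp
    exact ⟨a', ha', b', hap.trans hpe⟩
  -- Well-founded descent along the transitive closure of ∈.
  have wf : WellFounded (Relation.TransGen (· ∈ · : ZFSet → ZFSet → Prop)) :=
    ZFSet.mem_wf.transGen
  have : ∀ a, a ∈ x → False := fun a =>
    wf.induction (C := fun a => a ∈ x → False) a (by
      intro a IH ha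
      obtain ⟨a', ha', b', hae⟩ := key a ha
      have h1 : a' ∈ ({a'} : ZFSet) := ZFSet.mem_singleton.2 rfl
      have h2 : ({a'} : ZFSet) ∈ a := by
        rw [hae, ZFSet.pair]
        exact ZFSet.mem_insert_iff.2 (Or.inl rfl)
      exact IH a' (Relation.TransGen.head h1 (Relation.TransGen.single h2)) ha')
  exact this a ha
end

section
/- In every SMT-structure satisfying (ShapeSep), (Collection) and (Sum), for every set x and every family of predicates ψ assigning to each pair of positive integers (m, n) a predicate ψ m n : (Fin m → Fin n → V) → Prop, there is a set y such that for every α: α ∈ y if and only if α ∈ x and there exist m, n and a set-entried A : Fin m → Fin n → V with α = mat m n A and ψ m n A. (Proposition: any subset of a set made up of infinitely many different types of set matrices, whose defining condition varies with the matrix shape, is constructible in SMT by combining shape-by-shape separation, substitution and sum set.) -/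
/-!
Statement 8: in every SMT-structure satisfying (ShapeSep), (Collection) and (Sum), for
every set `x` and every shape-indexed family of predicates `ψ`, the subset of `x`
consisting of the set-entried matrices `mat m n A` (for positive `m`, `n`) satisfying
`ψ m n A` is constructible.
-/

theorem shape_dependent_separation {V : Type*} (mem : V → V → Prop) (IsSet : V → Prop)
    (mat : ∀ m n : ℕ, (Fin m → Fin n → V) → V)
    (hShapeSep : ∀ x, IsSet x → ∀ m n : ℕ, 0 < m → 0 < n →
      ∀ ψ : (Fin m → Fin n → V) → Prop,
        ∃ y, IsSet y ∧ ∀ α, mem α y ↔ mem α x ∧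
          ∃ A : Fin m → Fin n → V, (∀ i j, IsSet (A i j)) ∧ α = mat m n A ∧ ψ A)
    (hCollection : ∀ y : ℕ → ℕ → V, (∀ m n : ℕ, 0 < m → 0 < n → IsSet (y m n)) →
      ∃ Y, IsSet Y ∧ ∀ β, mem β Y ↔ ∃ m n : ℕ, 0 < m ∧ 0 < n ∧ β = y m n)
    (hSum : ∀ x, IsSet x → (∀ α, mem α x → IsSet α) →
      ∃ u, IsSet u ∧ ∀ β, mem β u ↔ ∃ z, mem z x ∧ mem β z) :
    ∀ x, IsSet x → ∀ ψ : ∀ m n : ℕ, (Fin m → Fin n → V) → Prop,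
      ∃ y, IsSet y ∧ ∀ α, mem α y ↔ mem α x ∧
        ∃ m n : ℕ, 0 < m ∧ 0 < n ∧
          ∃ A : Fin m → Fin n → V, (∀ i j, IsSet (A i j)) ∧ α = mat m n A ∧ ψ m n A := by

  intro x hx ψ
  classical
  set F : ∀ m n : ℕ, V := fun m n =>
    if h : 0 < m ∧ 0 < n then
      (hShapeSep x hx m n h.1 h.2 (ψ m n)).choose
    else x with hF
  have hFspec : ∀ m n : ℕ, 0 < m → 0 < n → IsSet (F m n) ∧
      ∀ α, mem α (F m n) ↔ mem α x ∧
        ∃ A : Fin m → Fin n → V, (∀ i j, IsSet (A i j)) ∧ α = mat m n A ∧ ψ m n A := by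
    intro m n hm hn
    have h : 0 < m ∧ 0 < n := ⟨hm, hn⟩
    simp only [hF, dif_pos h]
    exact (hShapeSep x hx m n h.1 h.2 (ψ m n)).choose_spec
  obtain ⟨Y, hY, hYmem⟩ := hCollection F (fun m n hm hn => (hFspec m n hm hn).1)
  have hYsets : ∀ α, mem α Y → IsSet α := by
    intro α hα
    obtain ⟨m, n, hm, hn, rfl⟩ := (hYmem α).1 hα
    exact (hFspec m n hm hn).1
  obtain ⟨u, hu, humem⟩ := hSum Y hY hYsets
  refine ⟨u, hu, fun α => ?_⟩
  rw [humem]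
  constructor
  · rintro ⟨z, hz, hαz⟩
    obtain ⟨m, n, hm, hn, rfl⟩ := (hYmem z).1 hz
    obtain ⟨hαx, A, hA⟩ := ((hFspec m n hm hn).2 α).1 hαz
    exact ⟨hαx, m, n, hm, hn, A, hA⟩
  · rintro ⟨hαx, m, n, hm, hn, A, hA⟩
    exact ⟨F m n, (hYmem (F m n)).2 ⟨m, n, hm, hn, rfl⟩,
      ((hFspec m n hm hn).2 α).2 ⟨hαx, A, hA⟩⟩
end

section
/- In every SMT-structure satisfying (ShapeSep), (ShapeRepl), (Collection) and (Sum), for every set x and every family of functions G assigning to each pair of positive integers (m, n) a function G m n : (Fin m → Fin n → V) → V, there is a set y such that for every β: β ∈ y if and only if there exist m, n and a set-entried A : Fin m → Fin n → V with mat m n A ∈ x and β = G m n A. (Proposition: the image of a set made up of infinitely many different types of set matrices under a shape-dependent functional relation is constructible in SMT.) -/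
/-!
Statement 9: in every SMT-structure satisfying (ShapeSep), (ShapeRepl), (Collection) and
(Sum), for every set `x` and every shape-indexed family of functions `G`, the image set
`{G m n A | mat m n A ∈ x, A set-entried, m, n positive}` is constructible.
-/

theorem shape_dependent_replacement {V : Type*} (mem : V → V → Prop) (IsSet : V → Prop)
    (mat : ∀ m n : ℕ, (Fin m → Fin n → V) → V)
    (hShapeSep : ∀ x, IsSet x → ∀ m n : ℕ, 0 < m → 0 < n →
      ∀ ψ : (Fin m → Fin n → V) → Prop,
        ∃ y, IsSet y ∧ ∀ α, mem α y ↔ mem α x ∧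
          ∃ A : Fin m → Fin n → V, (∀ i j, IsSet (A i j)) ∧ α = mat m n A ∧ ψ A)
    (hShapeRepl : ∀ w, IsSet w → ∀ m n : ℕ, 0 < m → 0 < n →
      ∀ G : (Fin m → Fin n → V) → V,
        ∃ v, IsSet v ∧ ∀ β, mem β v ↔
          ∃ A : Fin m → Fin n → V, (∀ i j, IsSet (A i j)) ∧ mem (mat m n A) w ∧ β = G A)
    (hCollection : ∀ y : ℕ → ℕ → V, (∀ m n : ℕ, 0 < m → 0 < n → IsSet (y m n)) →
      ∃ Y, IsSet Y ∧ ∀ β, mem β Y ↔ ∃ m n : ℕ, 0 < m ∧ 0 < n ∧ β = y m n)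
    (hSum : ∀ x, IsSet x → (∀ α, mem α x → IsSet α) →
      ∃ u, IsSet u ∧ ∀ β, mem β u ↔ ∃ z, mem z x ∧ mem β z) :
    ∀ x, IsSet x → ∀ G : ∀ m n : ℕ, (Fin m → Fin n → V) → V,
      ∃ y, IsSet y ∧ ∀ β, mem β y ↔
        ∃ m n : ℕ, 0 < m ∧ 0 < n ∧
          ∃ A : Fin m → Fin n → V, (∀ i j, IsSet (A i j)) ∧ mem (mat m n A) x ∧
            β = G m n A := by
  intro x hx G
  choose v hvset hvmem using fun m n (hm : 0 < m) (hn : 0 < n) =>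
    hShapeRepl x hx m n hm hn (G m n)
  obtain ⟨Y, hYset, hYmem⟩ := hCollection (fun m n => if h : 0 < m ∧ 0 < n then v m n h.1 h.2 else x)
    (by
      intro m n hm hn
      have h : 0 < m ∧ 0 < n := ⟨hm, hn⟩
      simp only [dif_pos h]
      exact hvset m n hm hn)
  obtain ⟨u, huset, humem⟩ := hSum Y hYset (by
    intro α hα
    obtain ⟨m, n, hm, hn, rfl⟩ := (hYmem α).1 hα
    have h : 0 < m ∧ 0 < n := ⟨hm, hn⟩
    simp only [dif_pos h]
    exact hvset m n hm hn)
  refine ⟨u, huset, fun β => ?_⟩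
  rw [humem]
  constructor
  · rintro ⟨z, hz, hβz⟩
    obtain ⟨m, n, hm, hn, rfl⟩ := (hYmem z).1 hz
    have h : 0 < m ∧ 0 < n := ⟨hm, hn⟩
    simp only [dif_pos h] at hβz
    obtain ⟨A, hA, hmem, rfl⟩ := (hvmem m n hm hn β).1 hβz
    exact ⟨m, n, hm, hn, A, hA, hmem, rfl⟩
  · rintro ⟨m, n, hm, hn, A, hA, hmem, rfl⟩
    refine ⟨v m n hm hn, (hYmem _).2 ⟨m, n, hm, hn, by have h : 0 < m ∧ 0 < n := ⟨hm, hn⟩; simp [dif_pos h]⟩, ?_⟩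
    exact (hvmem m n hm hn _).2 ⟨A, hA, hmem, rfl⟩
end

section
/- In every SMT-structure satisfying (ExtMat) and (NotSet), for all sets S, T, U and every set R such that every element of R equals mat 1 3 (mat 2 1 (a, b), mat 2 1 (f, g), mat 2 1 (u, v)) for some sets a, b, f, g, u, v (a 1×3 matrix whose three entries are set-entried 2×1 matrices), the 1×3 matrix mat 1 3 (S, T, U) is not an element of R. (This is the core of the paper's claim that, in SMT, from a relation R holding only between 2×1 set matrices no corresponding statement about sets S, T, U can be derived.) -/
/-!
Statement 10: in every SMT-structure satisfying (ExtMat) and (NotSet), for all sets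
`S`, `T`, `U` and every set `R` all of whose elements are 1×3 matrices whose three
entries are set-entried 2×1 matrices, the 1×3 matrix `mat 1 3 (S, T, U)` is not an
element of `R`.
-/

theorem sentence_about_sets_not_derivable {V : Type*} (mem : V → V → Prop)
    (IsSet : V → Prop) (mat : ∀ m n : ℕ, (Fin m → Fin n → V) → V)
    (hExtMat : ∀ (m n : ℕ) (A B : Fin m → Fin n → V), mat m n A = mat m n B → A = B)
    (hNotSet : ∀ (m n : ℕ) (A : Fin m → Fin n → V), 2 ≤ m * n →
      (∀ i j, IsSet (A i j)) → ¬ IsSet (mat m n A)) :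
    ∀ S T U : V, IsSet S → IsSet T → IsSet U →
      ∀ R : V, IsSet R →
        (∀ ρ, mem ρ R → ∃ a b f g u v, IsSet a ∧ IsSet b ∧ IsSet f ∧ IsSet g ∧
          IsSet u ∧ IsSet v ∧
          ρ = mat 1 3 ![![mat 2 1 ![![a], ![b]],
                          mat 2 1 ![![f], ![g]],
                          mat 2 1 ![![u], ![v]]]]) →
        ¬ mem (mat 1 3 ![![S, T, U]]) R := by
  intro S T U hS hT hU R hR hall hmem
  obtain ⟨a, b, f, g, u, v, ha, hb, hf, hg, hu, hv, heq⟩ := hall _ hmem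
  have h := hExtMat 1 3 _ _ heq
  have hS' : S = mat 2 1 ![![a], ![b]] := congrFun (congrFun h 0) 0
  exact hNotSet 2 1 ![![a], ![b]] (by norm_num)
    (by intro i j; fin_cases i <;> fin_cases j <;> simpa) (hS' ▸ hS)
end
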